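/- Let p ≥ 3 be an odd integer. For all real numbers x, y with x + y = 1, one has x^p + Σ_{k=1}^{(p−1)/2} (p/(p−k))·C(p−k, k)·x^{p−2k}·y^k + y^p = 1, where C(p−k, k) denotes a binomial coefficient. Moreover each coefficient c_k = (p/(p−k))·C(p−k, k) for 1 ≤ k ≤ (p−1)/2 is positive. -/

import Mathlib

noncomputable def Saux (x y : ℝ) (n : ℕ) : ℝ :=
  ∑ k ∈ Finset.range (n+1), ((n-k).choose k : ℝ) * x^(n-2*k) * y^k

lemma Saux_rec (x y : ℝ) (n : ℕ) :
    Saux x y (n+2) = x * Saux x y (n+1) + y * Saux x y n := by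
  unfold Saux
  rw [Finset.sum_range_succ' _ (n+2), Finset.sum_range_succ _ (n+1),
    Finset.sum_range_succ' _ (n+1)]
  have hlast : ((n+2 - (n+1+1)).choose (n+1+1) : ℝ) * x ^ (n+2-2*(n+1+1)) * y ^ (n+1+1) = 0 := by
    have : n+2 - (n+1+1) = 0 := by omega
    rw [this, Nat.choose_eq_zero_of_lt (by omega)]
    simp
  rw [hlast]
  have key : ∀ i ∈ Finset.range (n+1),
      ((n+2 - (i+1)).choose (i+1) : ℝ) * x ^ (n+2-2*(i+1)) * y ^ (i+1)
      = x * (((n+1 - (i+1)).choose (i+1) : ℝ) * x ^ (n+1-2*(i+1)) * y ^ (i+1))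
        + y * (((n-i).choose i : ℝ) * x ^ (n-2*i) * y ^ i) := by
    intro i hi
    simp only [Finset.mem_range] at hi
    have h1 : n+2 - (i+1) = (n-i) + 1 := by omega
    have h2 : n+1 - (i+1) = n - i := by omega
    rw [h1, h2, Nat.choose_succ_succ]
    push_cast
    by_cases h : 2*i+1 ≤ n
    · have e1 : n+2-2*(i+1) = n - 2*i := by omega
      have e2 : n - 2*i = (n+1-2*(i+1)) + 1 := by omega
      rw [e1, e2, pow_succ]
      ring
    · have hz : ((n-i).choose (i+1) : ℝ) = 0 := by
        rw [Nat.choose_eq_zero_of_lt (by omega)]; simp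
      have e1 : n+2-2*(i+1) = n - 2*i := by omega
      rw [hz, e1]
      ring
  rw [Finset.sum_congr rfl key, Finset.sum_add_distrib, ← Finset.mul_sum, ← Finset.mul_sum]
  simp only [Nat.sub_zero, Nat.choose_zero_right, Nat.cast_one, one_mul, pow_zero, mul_one,
    Nat.mul_zero]
  ring

lemma Saux_eq (y : ℝ) : ∀ n : ℕ, Saux (1-y) y n = ∑ i ∈ Finset.range (n+1), (-y)^i := by
  intro n
  induction n using Nat.strong_induction_on with
  | _ n ih =>
    match n with
    | 0 => simp [Saux]
    | 1 =>
      simp [Saux, Finset.sum_range_succ]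
      ring
    | (m+2) =>
      rw [Saux_rec, ih (m+1) (by omega), ih m (by omega),
        Finset.sum_range_succ _ (m+2), Finset.sum_range_succ _ (m+1)]
      rw [show ((-y):ℝ)^(m+2) = (-y)^(m+1) * (-y) from pow_succ _ _]
      ring

lemma coeff_eq (p k : ℕ) (hk1 : 1 ≤ k) (hk2 : 2*k + 1 ≤ p) :
    (p:ℝ)/((p:ℝ)-(k:ℝ)) * ((p-k).choose k : ℝ)
      = ((p-k).choose k : ℝ) + ((p-k-1).choose (k-1) : ℝ) := by
  have hnat : (p-k) * ((p-k-1).choose (k-1)) = ((p-k).choose k) * k := by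
    have h := Nat.add_one_mul_choose_eq (p-k-1) (k-1)
    have e1 : p-k-1+1 = p - k := by omega
    have e3 : k-1+1 = k := by omega
    rw [e1, e3] at h
    exact h
  have hcast : ((p - k : ℕ) : ℝ) = (p:ℝ) - k := by
    push_cast [Nat.cast_sub (by omega : k ≤ p)]; ring
  have hR : ((p:ℝ)-k) * ((p-k-1).choose (k-1) : ℝ) = ((p-k).choose k : ℝ) * k := by
    rw [← hcast]
    exact_mod_cast hnat
  have hd : (p:ℝ) - k ≠ 0 := by
    have : (k:ℝ) < p := by exact_mod_cast (by omega : k < p)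
    linarith
  field_simp
  linear_combination -hR

lemma geo_comb (y : ℝ) : ∀ n : ℕ,
    (∑ i ∈ Finset.range (n+3), (-y)^i) + y * (∑ i ∈ Finset.range (n+1), (-y)^i)
      = 1 + (-y)^(n+2) := by
  intro n
  induction n with
  | zero =>
    simp [Finset.sum_range_succ]
    ring
  | succ m ih =>
    rw [Finset.sum_range_succ _ (m+3), Finset.sum_range_succ _ (m+1)]
    have h1 : ((-y):ℝ)^(m+3) = (-y)^(m+2) * (-y) := pow_succ _ _
    have h2 : ((-y):ℝ)^(m+2) = (-y)^(m+1) * (-y) := pow_succ _ _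
    rw [mul_add]
    nlinarith [ih, h1, h2]

/-- The canonical polynomial `f_{p,2}` for `Γ(p,2)` equals `1` on the line
`x + y = 1`, and all its coefficients `c_k = (p/(p−k))·C(p−k,k)` are positive. -/
theorem stmt_6 (p : ℕ) (hp : 3 ≤ p) (hodd : Odd p) :
    (∀ x y : ℝ, x + y = 1 →
      x ^ p +
        (∑ k ∈ Finset.Icc 1 ((p - 1) / 2),
          ((p : ℝ) / ((p : ℝ) - (k : ℝ)) * ((p - k).choose k : ℝ)) * x ^ (p - 2 * k) * y ^ k) +
        y ^ p = 1) ∧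
    (∀ k : ℕ, 1 ≤ k → k ≤ (p - 1) / 2 →
      0 < (p : ℝ) / ((p : ℝ) - (k : ℝ)) * ((p - k).choose k : ℝ)) := by
  obtain ⟨t, ht⟩ := hodd
  constructor
  · intro x y hxy
    have hx : x = 1 - y := by linarith
    subst hx
    set m := (p - 1) / 2 with hm
    -- replace coefficients by natural ones
    have hA : ∑ k ∈ Finset.Icc 1 m,
        ((p : ℝ) / ((p : ℝ) - (k : ℝ)) * ((p - k).choose k : ℝ)) * (1-y) ^ (p - 2 * k) * y ^ k
        = (∑ k ∈ Finset.Icc 1 m, ((p-k).choose k : ℝ) * (1-y) ^ (p - 2*k) * y ^ k)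
          + ∑ k ∈ Finset.Icc 1 m, ((p-k-1).choose (k-1) : ℝ) * (1-y) ^ (p - 2*k) * y ^ k := by
      rw [← Finset.sum_add_distrib]
      refine Finset.sum_congr rfl ?_
      intro k hk
      simp only [Finset.mem_Icc] at hk
      rw [coeff_eq p k hk.1 (by omega)]
      ring
    -- first sum is Saux minus the top term
    have hB : Saux (1-y) y p
        = (1-y)^p + ∑ k ∈ Finset.Icc 1 m, ((p-k).choose k : ℝ) * (1-y) ^ (p - 2*k) * y ^ k := by
      unfold Saux
      rw [← Finset.sum_subset (Finset.range_subset_range.2 (by omega : m+1 ≤ p+1))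
        (fun i _ hi => by
          have him : m + 1 ≤ i := by
            by_contra hcon
            exact hi (Finset.mem_range.2 (by omega))
          rw [Nat.choose_eq_zero_of_lt (by omega)]
          simp)]
      have hins : Finset.range (m+1) = insert 0 (Finset.Icc 1 m) := by
        ext a
        simp only [Finset.mem_range, Finset.mem_insert, Finset.mem_Icc]
        omega
      rw [hins, Finset.sum_insert (by simp)]
      simp
    -- second sum is y * Saux (p-2)
    have hC : ∑ k ∈ Finset.Icc 1 m, ((p-k-1).choose (k-1) : ℝ) * (1-y) ^ (p - 2*k) * y ^ k
        = y * Saux (1-y) y (p-2) := by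
      rw [← Finset.Ico_add_one_right_eq_Icc, Finset.sum_Ico_eq_sum_range]
      have hstep : ∀ i ∈ Finset.range (m+1-1),
          ((p-(1+i)-1).choose ((1+i)-1) : ℝ) * (1-y) ^ (p - 2*(1+i)) * y ^ (1+i)
          = y * (((p-2-i).choose i : ℝ) * (1-y) ^ (p-2 - 2*i) * y ^ i) := by
        intro i hi
        have e1 : p-(1+i)-1 = p-2-i := by omega
        have e2 : (1+i)-1 = i := by omega
        have e3 : p - 2*(1+i) = p-2-2*i := by omega
        rw [e1, e2, e3, pow_add]
        ring
      rw [Finset.sum_congr rfl hstep, ← Finset.mul_sum]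
      congr 1
      unfold Saux
      rw [← Finset.sum_subset (Finset.range_subset_range.2 (by omega : m+1-1 ≤ p-2+1))
        (fun i _ hi => by
          have him : m ≤ i := by
            by_contra hcon
            exact hi (Finset.mem_range.2 (by omega))
          rw [Nat.choose_eq_zero_of_lt (by omega)]
          simp)]
    rw [hA, show (1-y) ^ p +
        ((∑ k ∈ Finset.Icc 1 m, ((p-k).choose k : ℝ) * (1-y) ^ (p - 2*k) * y ^ k)
          + ∑ k ∈ Finset.Icc 1 m, ((p-k-1).choose (k-1) : ℝ) * (1-y) ^ (p - 2*k) * y ^ k)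
        + y ^ p
        = ((1-y)^p + ∑ k ∈ Finset.Icc 1 m, ((p-k).choose k : ℝ) * (1-y) ^ (p - 2*k) * y ^ k)
          + (∑ k ∈ Finset.Icc 1 m, ((p-k-1).choose (k-1) : ℝ) * (1-y) ^ (p - 2*k) * y ^ k)
          + y ^ p from by ring, ← hB, hC, Saux_eq, Saux_eq]
    obtain ⟨n, rfl⟩ : ∃ n, p = n + 2 := ⟨p - 2, by omega⟩
    have hr : n + 2 - 2 = n := by omega
    rw [hr]
    rw [geo_comb y n]
    have : ((-y):ℝ)^(n+2) = -y^(n+2) := Odd.neg_pow ⟨t, by omega⟩ y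
    rw [this]
    ring
  · intro k hk1 hk2
    have hkp : 2*k + 1 ≤ p := by omega
    apply mul_pos
    · apply div_pos
      · exact_mod_cast Nat.cast_pos.2 (by omega : 0 < p)
      · have : (k:ℝ) < p := by exact_mod_cast (by omega : k < p)
        linarith
    · exact_mod_cast Nat.choose_pos (by omega : k ≤ p - k)
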